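/- In a quasi-order (P, ≤), if κ is a regular uncountable cardinal and C ⊆ P is a κ-chain (the image of an order-preserving bijection from κ) that is unbounded in P, then there exists a subset C' ⊆ C of cardinality κ that is a chain with respect to the strict order < (where a < b iff a ≤ b and not b ≤ a). -/

import Mathlib

/-- In a quasi-order (P, ≤), if κ is a regular uncountable cardinal and
C ⊆ P is a κ-chain (image of an order-preserving bijection from κ) unbounded in P,
then there is C' ⊆ C of cardinality κ that is a chain for the strict order `<`. -/
theorem stmt0 {P : Type*} [Preorder P] (κ : Cardinal) (hreg : κ.IsRegular)
    (hunc : Cardinal.aleph0 < κ) (C : Set P)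
    (σ : κ.ord.ToType → P) (hmono : Monotone σ) (hinj : Function.Injective σ)
    (hrange : Set.range σ = C)
    (hunb : ¬ ∃ b : P, ∀ c ∈ C, c ≤ b) :
    ∃ C' ⊆ C, Cardinal.mk C' = κ ∧ IsChain (· < ·) (C' : Set P) := by
  -- key: for every β there is γ > β with ¬ σ γ ≤ σ β
  have key : ∀ β : κ.ord.ToType, ∃ γ : κ.ord.ToType, β < γ ∧ ¬ σ γ ≤ σ β := by
    intro β
    by_contra h
    push_neg at h
    apply hunb
    refine ⟨σ β, ?_⟩
    rintro c hc
    rw [← hrange] at hc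
    obtain ⟨δ, rfl⟩ := hc
    rcases le_or_gt δ β with hle | hlt
    · exact hmono hle
    · exact h δ hlt
  set R : Set κ.ord.ToType := {α | ∀ β < α, ¬ σ α ≤ σ β} with hR
  -- R is unbounded
  have hub : ∀ β : κ.ord.ToType, ∃ α ∈ R, β < α := by
    intro β
    obtain ⟨γ, hβγ, hγ⟩ := key β
    -- least α equivalent to γ
    have hex : ∃ α : κ.ord.ToType, σ γ ≤ σ α ∧ σ α ≤ σ γ := ⟨γ, le_refl _, le_refl _⟩
    obtain ⟨α, ⟨h1, h2⟩, hmin⟩ := (@wellFounded_lt κ.ord.ToType _ _).has_min _ hex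
    refine ⟨α, ?_, ?_⟩
    · intro β' hβ' hle
      exact hmin β' ⟨h1.trans hle, (hmono hβ'.le).trans h2⟩ hβ'
    · by_contra hcon
      push_neg at hcon
      exact hγ (h1.trans (hmono hcon))
  have hchain : IsChain (· < ·) (σ '' R) := by
    rintro _ ⟨a, ha, rfl⟩ _ ⟨b, hb, rfl⟩ hne
    have hab : a ≠ b := fun h => hne (by rw [h])
    rcases hab.lt_or_gt with h | h
    · exact Or.inl (lt_iff_le_not_ge.2 ⟨hmono h.le, hb a h⟩)
    · exact Or.inr (lt_iff_le_not_ge.2 ⟨hmono h.le, ha b h⟩)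
  refine ⟨σ '' R, ?_, ?_, hchain⟩
  · rw [← hrange]; exact Set.image_subset_range _ _
  · have h1 : Cardinal.mk (σ '' R) = Cardinal.mk R := Cardinal.mk_image_eq hinj
    rw [h1]
    apply le_antisymm
    · calc Cardinal.mk R ≤ Cardinal.mk κ.ord.ToType := Cardinal.mk_set_le R
        _ = κ := by rw [Cardinal.mk_toType, Cardinal.card_ord]
    · have hcof : κ ≤ (κ.ord).cof := hreg.2
      have hU : Set.Unbounded ((· < ·) : κ.ord.ToType → κ.ord.ToType → Prop) R := by
        intro a
        obtain ⟨α, hα, h⟩ := hub a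
        exact ⟨α, hα, fun hlt => absurd hlt (not_lt.2 h.le)⟩
      haveI : IsWellOrder κ.ord.ToType ((· < ·) : κ.ord.ToType → κ.ord.ToType → Prop) := isWellOrder_lt
      have := Order.cof_le (s := R) (fun a => by obtain ⟨b, hb, h⟩ := hU a; exact ⟨b, hb, not_lt.1 h⟩)
      rw [Ordinal.cof_toType] at this
      exact hcof.trans this
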